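/- Let k ≥ 2. Define 𝒜_k = {α(d/(k−1), e/(k−1)) : d,e ∈ ℤ} ⊆ ℂ. Then |𝒜_k| = ((k−1)² + 3(k−1) + 2·gcd(k−1,3))/6. -/

import Mathlib

/-- `α(σ,τ) = e^{2πiσ} + e^{2πiτ} + e^{-2πi(σ+τ)}`. -/
noncomputable def alpha (σ τ : ℝ) : ℂ :=
  Complex.exp (2 * Real.pi * Complex.I * σ) + Complex.exp (2 * Real.pi * Complex.I * τ) +
    Complex.exp (-(2 * Real.pi * Complex.I * (σ + τ)))



open Multiset in
lemma triple_eq {α : Type*} {x y z a b c : α} (h : ({x,y,z} : Multiset α) = {a,b,c}) :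
    (x=a∧y=b∧z=c) ∨ (x=a∧y=c∧z=b) ∨ (x=b∧y=a∧z=c) ∨ (x=b∧y=c∧z=a) ∨ (x=c∧y=a∧z=b) ∨ (x=c∧y=b∧z=a) := by
  simp only [insert_eq_cons] at h
  rcases cons_eq_cons.1 h with ⟨hxa, h2⟩ | ⟨hxa, u, h2, h3⟩
  · rcases cons_eq_cons.1 h2 with ⟨hyb, h3⟩ | ⟨hyb, u, h3, h4⟩
    · exact Or.inl ⟨hxa, hyb, singleton_inj.1 h3⟩
    · obtain ⟨hzb, hu⟩ := (singleton_eq_cons_iff _).1 h3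
      rw [hu, cons_zero, singleton_inj] at h4
      exact Or.inr (Or.inl ⟨hxa, h4.symm, hzb⟩)
  · rcases cons_eq_cons.1 h2 with ⟨hya, h4⟩ | ⟨hya, v, h4, h5⟩
    · rw [← h4] at h3
      rcases cons_eq_cons.1 h3 with ⟨hbx, h5⟩ | ⟨hbx, w, h5, h6⟩
      · exact Or.inr (Or.inr (Or.inl ⟨hbx.symm, hya, (singleton_inj.1 h5).symm⟩))
      · obtain ⟨hcx, hw⟩ := (singleton_eq_cons_iff _).1 h5
        rw [hw, cons_zero, singleton_inj] at h6
        exact Or.inr (Or.inr (Or.inr (Or.inr (Or.inl ⟨hcx.symm, hya, h6⟩))))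
    · obtain ⟨hza, hv⟩ := (singleton_eq_cons_iff _).1 h4
      rw [hv, cons_zero] at h5
      rw [h5] at h3
      rcases cons_eq_cons.1 h3 with ⟨hbx, h6⟩ | ⟨hbx, w, h6, h7⟩
      · exact Or.inr (Or.inr (Or.inr (Or.inl ⟨hbx.symm, (singleton_inj.1 h6).symm, hza⟩)))
      · obtain ⟨hcx, hw⟩ := (singleton_eq_cons_iff _).1 h6
        rw [hw, cons_zero, singleton_inj] at h7
        exact Or.inr (Or.inr (Or.inr (Or.inr (Or.inr ⟨hcx.symm, h7, hza⟩))))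

open Complex

noncomputable def eZ (n : ℕ) (d : ℤ) : ℂ := Complex.exp ((2 * Real.pi * (d / n) : ℝ) * Complex.I)

noncomputable def ee (n : ℕ) (a : ZMod n) : ℂ := eZ n a.val

lemma eZ_add (n : ℕ) (d e : ℤ) : eZ n (d + e) = eZ n d * eZ n e := by
  rw [eZ, eZ, eZ, ← Complex.exp_add]
  congr 1
  push_cast
  ring

lemma eZ_intCast (n : ℕ) [NeZero n] (d : ℤ) : eZ n d = ee n (d : ZMod n) := by
  have hd : (n : ℤ) ∣ d - ((d : ZMod n).val : ℤ) := by
    rw [← ZMod.intCast_zmod_eq_zero_iff_dvd]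
    push_cast
    simp [ZMod.natCast_val, ZMod.cast_id]
  obtain ⟨m, hm⟩ := hd
  rw [ee, eZ, eZ, Complex.exp_eq_exp_iff_exists_int]
  refine ⟨m, ?_⟩
  have hn : (n : ℂ) ≠ 0 := Nat.cast_ne_zero.2 (NeZero.ne n)
  have hr : (d : ℝ) - ((d : ZMod n).cast : ℝ) = n * m := by
    have := congrArg (Int.cast : ℤ → ℝ) hm
    push_cast at this
    rw [ZMod.natCast_val] at this
    linarith
  have hnn : (n : ℝ) ≠ 0 := Nat.cast_ne_zero.2 (NeZero.ne n)
  have hreal : (2 * Real.pi * ((d : ℝ)/n) : ℝ) = 2 * Real.pi * ((((d : ZMod n).val : ℕ) : ℝ)/n) + m * (2 * Real.pi) := by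
    rw [ZMod.natCast_val]
    field_simp
    linear_combination hr
  rw [hreal, Complex.ofReal_add, add_mul]
  congr 1
  push_cast
  ring

lemma ee_zero (n : ℕ) [NeZero n] : ee n 0 = 1 := by
  rw [ee, ZMod.val_zero, eZ]
  norm_num

lemma ee_add (n : ℕ) [NeZero n] (x y : ZMod n) : ee n (x + y) = ee n x * ee n y := by
  have hx : ee n x = eZ n (x.val : ℤ) := by
    rw [eZ_intCast]; congr 1; push_cast; simp [ZMod.natCast_val, ZMod.cast_id]
  have hy : ee n y = eZ n (y.val : ℤ) := by
    rw [eZ_intCast]; congr 1; push_cast; simp [ZMod.natCast_val, ZMod.cast_id]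
  have hxy : ee n (x + y) = eZ n ((x.val : ℤ) + (y.val : ℤ)) := by
    rw [eZ_intCast]; congr 1; push_cast; simp [ZMod.natCast_val, ZMod.cast_id]
  rw [hx, hy, hxy, eZ_add]

lemma ee_abs (n : ℕ) (a : ZMod n) : ‖ee n a‖ = 1 := by
  rw [ee, eZ]; exact Complex.norm_exp_ofReal_mul_I _

lemma ee_inj (n : ℕ) [NeZero n] : Function.Injective (ee n) := by
  intro a b h
  rw [ee, ee, eZ, eZ, Complex.exp_eq_exp_iff_exists_int] at h
  obtain ⟨m, hm⟩ := h
  have him := congrArg Complex.im hm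
  simp [Complex.add_im, Complex.mul_im, Complex.mul_re] at him
  have hn : (n : ℝ) ≠ 0 := Nat.cast_ne_zero.2 (NeZero.ne n)
  have hπ : Real.pi ≠ 0 := Real.pi_ne_zero
  have h3 : ((ZMod.cast a : ℝ)) = (ZMod.cast b : ℝ) + m * n := by
    field_simp at him
    have h' : (2*Real.pi) * (ZMod.cast a : ℝ) = (2*Real.pi) * ((ZMod.cast b : ℝ) + m * n) := by
      linear_combination (2*Real.pi) * him
    exact mul_left_cancel₀ (by positivity) h'
  have hb : (ZMod.cast b : ℝ) < n := by rw [← ZMod.natCast_val]; exact_mod_cast ZMod.val_lt b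
  have ha : (ZMod.cast a : ℝ) < n := by rw [← ZMod.natCast_val]; exact_mod_cast ZMod.val_lt a
  have ha0 : (0:ℝ) ≤ (ZMod.cast a : ℝ) := by rw [← ZMod.natCast_val]; exact Nat.cast_nonneg _
  have hb0 : (0:ℝ) ≤ (ZMod.cast b : ℝ) := by rw [← ZMod.natCast_val]; exact Nat.cast_nonneg _
  have hm0 : m = 0 := by
    rcases lt_trichotomy m 0 with hlt | h0 | hgt
    · have hle : m ≤ -1 := by omega
      have : (m : ℝ) ≤ -1 := by exact_mod_cast hle
      have hnpos : (0:ℝ) < n := lt_of_le_of_ne (Nat.cast_nonneg n) (Ne.symm hn)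
      nlinarith
    · exact h0
    · have hge : 1 ≤ m := hgt
      have : (1 : ℝ) ≤ m := by exact_mod_cast hge
      have hnpos : (0:ℝ) < n := lt_of_le_of_ne (Nat.cast_nonneg n) (Ne.symm hn)
      nlinarith
  rw [hm0] at h3
  have hvv : (a.val : ℝ) = (b.val : ℝ) := by
    rw [ZMod.natCast_val, ZMod.natCast_val]; simpa using h3
  exact ZMod.val_injective n (by exact_mod_cast hvv)
open Polynomial in
lemma key (n : ℕ) [NeZero n] (a b a' b' : ZMod n)
    (h : ee n a + ee n b + ee n (-(a+b)) = ee n a' + ee n b' + ee n (-(a'+b'))) :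
    (a=a'∧b=b') ∨ (a=a'∧b=-(a'+b')) ∨ (a=b'∧b=a') ∨ (a=b'∧b=-(a'+b')) ∨
      (a=-(a'+b')∧b=a') ∨ (a=-(a'+b')∧b=b') := by
  set x := ee n a with hx
  set y := ee n b with hy
  set z := ee n (-(a+b)) with hz
  set x' := ee n a' with hx'
  set y' := ee n b' with hy'
  set z' := ee n (-(a'+b')) with hz'
  have habs : ∀ c : ZMod n, ‖ee n c‖ = 1 := ee_abs n
  have hne : ∀ c : ZMod n, ee n c ≠ 0 := fun c hc => by
    have := habs c; rw [hc] at this; simp at this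
  have hconj : ∀ c : ZMod n, (starRingEnd ℂ) (ee n c) = (ee n c)⁻¹ :=
    fun c => (Complex.inv_eq_conj (habs c)).symm
  have e3 : x * y * z = 1 := by
    rw [hx, hy, hz, ← ee_add, ← ee_add, show a + b + -(a+b) = 0 by ring, ee_zero]
  have e3' : x' * y' * z' = 1 := by
    rw [hx', hy', hz', ← ee_add, ← ee_add, show a' + b' + -(a'+b') = 0 by ring, ee_zero]
  have e2 : x*y + x*z + y*z = (starRingEnd ℂ) (x + y + z) := by
    have h1 : x * y = (starRingEnd ℂ) z := by
      rw [hconj]; exact eq_inv_of_mul_eq_one_left (by linear_combination e3)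
    have h2 : x * z = (starRingEnd ℂ) y := by
      rw [hconj]; exact eq_inv_of_mul_eq_one_left (by linear_combination e3)
    have h3 : y * z = (starRingEnd ℂ) x := by
      rw [hconj]; exact eq_inv_of_mul_eq_one_left (by linear_combination e3)
    rw [h1, h2, h3, map_add, map_add]; ring
  have e2' : x'*y' + x'*z' + y'*z' = (starRingEnd ℂ) (x' + y' + z') := by
    have h1 : x' * y' = (starRingEnd ℂ) z' := by
      rw [hconj]; exact eq_inv_of_mul_eq_one_left (by linear_combination e3')
    have h2 : x' * z' = (starRingEnd ℂ) y' := by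
      rw [hconj]; exact eq_inv_of_mul_eq_one_left (by linear_combination e3')
    have h3 : y' * z' = (starRingEnd ℂ) x' := by
      rw [hconj]; exact eq_inv_of_mul_eq_one_left (by linear_combination e3')
    rw [h1, h2, h3, map_add, map_add]; ring
  have hpoly : ∀ u v w : ℂ, (X - C u) * (X - C v) * (X - C w)
      = X^3 - C (u+v+w) * X^2 + C (u*v+u*w+v*w) * X - C (u*v*w) := by
    intro u v w
    simp only [map_add, map_mul]
    ring
  have hPeq : (X - C x) * (X - C y) * (X - C z) = (X - C x') * (X - C y') * (X - C z') := by
    rw [hpoly, hpoly, e3, e3', e2, e2', h]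
  have hroots : ({x, y, z} : Multiset ℂ) = {x', y', z'} := by
    have r1 : (({x, y, z} : Multiset ℂ).map (fun r => X - C r)).prod
        = (X - C x) * (X - C y) * (X - C z) := by
      simp [Multiset.insert_eq_cons, mul_assoc]
    have r2 : (({x', y', z'} : Multiset ℂ).map (fun r => X - C r)).prod
        = (X - C x') * (X - C y') * (X - C z') := by
      simp [Multiset.insert_eq_cons, mul_assoc]
    calc ({x, y, z} : Multiset ℂ) = (({x, y, z} : Multiset ℂ).map (fun r => X - C r)).prod.roots :=
          (roots_multiset_prod_X_sub_C _).symm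
      _ = (({x', y', z'} : Multiset ℂ).map (fun r => X - C r)).prod.roots := by rw [r1, r2, hPeq]
      _ = {x', y', z'} := roots_multiset_prod_X_sub_C _
  have inj := ee_inj n
  rcases triple_eq hroots with ⟨c1,c2,_⟩|⟨c1,c2,_⟩|⟨c1,c2,_⟩|⟨c1,c2,_⟩|⟨c1,c2,_⟩|⟨c1,c2,_⟩
  · exact Or.inl ⟨inj c1, inj c2⟩
  · exact Or.inr (Or.inl ⟨inj c1, inj c2⟩)
  · exact Or.inr (Or.inr (Or.inl ⟨inj c1, inj c2⟩))
  · exact Or.inr (Or.inr (Or.inr (Or.inl ⟨inj c1, inj c2⟩)))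
  · exact Or.inr (Or.inr (Or.inr (Or.inr (Or.inl ⟨inj c1, inj c2⟩))))
  · exact Or.inr (Or.inr (Or.inr (Or.inr (Or.inr ⟨inj c1, inj c2⟩))))
noncomputable def FF (n : ℕ) (p : ZMod n × ZMod n) : ℂ :=
  ee n p.1 + ee n p.2 + ee n (-(p.1 + p.2))

lemma FF_eq_iff (n : ℕ) [NeZero n] (a b : ZMod n) (q : ZMod n × ZMod n) :
    FF n q = FF n (a, b) ↔
      (q = (a,b) ∨ q = (a,-(a+b)) ∨ q = (b,a) ∨ q = (b,-(a+b)) ∨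
       q = (-(a+b),a) ∨ q = (-(a+b),b)) := by
  constructor
  · intro h
    have hk := key n q.1 q.2 a b h
    have hq : q = (q.1, q.2) := rfl
    rcases hk with ⟨h1,h2⟩|⟨h1,h2⟩|⟨h1,h2⟩|⟨h1,h2⟩|⟨h1,h2⟩|⟨h1,h2⟩ <;>
      simp [Prod.ext_iff, h1, h2]
  · intro hq
    rcases hq with rfl|rfl|rfl|rfl|rfl|rfl
    · rfl
    · show ee n a + ee n (-(a+b)) + ee n (-(a + -(a+b))) = ee n a + ee n b + ee n (-(a+b))
      rw [show -(a + -(a+b)) = b by ring]; ring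
    · show ee n b + ee n a + ee n (-(b+a)) = ee n a + ee n b + ee n (-(a+b))
      rw [show -(b+a) = -(a+b) by ring]; ring
    · show ee n b + ee n (-(a+b)) + ee n (-(b + -(a+b))) = ee n a + ee n b + ee n (-(a+b))
      rw [show -(b + -(a+b)) = a by ring]; ring
    · show ee n (-(a+b)) + ee n a + ee n (-(-(a+b) + a)) = ee n a + ee n b + ee n (-(a+b))
      rw [show -(-(a+b) + a) = b by ring]; ring
    · show ee n (-(a+b)) + ee n b + ee n (-(-(a+b) + b)) = ee n a + ee n b + ee n (-(a+b))
      rw [show -(-(a+b) + b) = a by ring]; ring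
lemma card_torsion (n : ℕ) [NeZero n] :
    (Finset.univ.filter (fun a : ZMod n => a + a + a = 0)).card = Nat.gcd n 3 := by
  classical
  set f : ZMod n →+ ZMod n := AddMonoidHom.mk' (fun a => a + a + a) (by intro a b; ring) with hf
  have hrange : f.range = AddSubgroup.zmultiples (3 : ZMod n) := by
    ext x
    simp only [AddMonoidHom.mem_range, AddSubgroup.mem_zmultiples_iff]
    constructor
    · rintro ⟨a, rfl⟩
      obtain ⟨k, rfl⟩ := ZMod.intCast_surjective a
      refine ⟨k, ?_⟩
      show k • (3 : ZMod n) = (k : ZMod n) + (k : ZMod n) + (k : ZMod n)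
      rw [zsmul_eq_mul]; push_cast; ring
    · rintro ⟨k, rfl⟩
      refine ⟨(k : ZMod n), ?_⟩
      show (k : ZMod n) + (k : ZMod n) + (k : ZMod n) = k • (3 : ZMod n)
      rw [zsmul_eq_mul]; push_cast; ring
  have hcard_range : Nat.card f.range = n / Nat.gcd n 3 := by
    rw [hrange]
    have h3 : (3 : ZMod n) = ((3 : ℕ) : ZMod n) := by norm_cast
    rw [h3, Nat.card_zmultiples, ZMod.addOrderOf_coe 3 (NeZero.ne n)]
  have hmain : n = Nat.card f.range * Nat.card f.ker := by
    have h1 : Nat.card (ZMod n) = Nat.card (ZMod n ⧸ f.ker) * Nat.card f.ker :=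
      AddSubgroup.card_eq_card_quotient_mul_card_addSubgroup f.ker
    have h2 : Nat.card (ZMod n ⧸ f.ker) = Nat.card f.range :=
      Nat.card_congr (QuotientAddGroup.quotientKerEquivRange f).toEquiv
    calc n = Nat.card (ZMod n) := (Nat.card_zmod n).symm
      _ = Nat.card (ZMod n ⧸ f.ker) * Nat.card f.ker := h1
      _ = Nat.card f.range * Nat.card f.ker := by rw [h2]
  have hg : Nat.gcd n 3 ∣ n := Nat.gcd_dvd_left n 3
  have hker : Nat.card f.ker = Nat.gcd n 3 := by
    have hpos : 0 < n / Nat.gcd n 3 :=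
      Nat.div_pos (Nat.le_of_dvd (Nat.pos_of_ne_zero (NeZero.ne n)) hg)
        (Nat.gcd_pos_of_pos_right n (by norm_num))
    have : n / Nat.gcd n 3 * Nat.card f.ker = n / Nat.gcd n 3 * Nat.gcd n 3 := by
      rw [Nat.div_mul_cancel hg, ← hcard_range, ← hmain]
    exact Nat.eq_of_mul_eq_mul_left hpos this
  rw [← hker]
  rw [Nat.card_eq_fintype_card]
  rw [← Fintype.card_subtype]
  apply Fintype.card_congr
  apply Equiv.subtypeEquivRight
  intro x
  simp [f, AddMonoidHom.mem_ker, AddMonoidHom.mk'_apply]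
noncomputable def fib (n : ℕ) [NeZero n] (p : ZMod n × ZMod n) : Finset (ZMod n × ZMod n) :=
  Finset.univ.filter (fun q => FF n q = FF n p)

lemma fib_eq (n : ℕ) [NeZero n] (a b : ZMod n) :
    fib n (a, b) = ({(a,b),(a,-(a+b)),(b,a),(b,-(a+b)),(-(a+b),a),(-(a+b),b)} :
      Finset (ZMod n × ZMod n)) := by
  ext q
  simp only [fib, Finset.mem_filter, Finset.mem_univ, true_and, Finset.mem_insert,
    Finset.mem_singleton]
  exact FF_eq_iff n a b q

lemma card3' {α : Type*} [DecidableEq α] (x y z : α) (hxy : x ≠ y) (hxz : x ≠ z) (hyz : y ≠ z) :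
    ({x,y,z} : Finset α).card = 3 := by
  rw [Finset.card_insert_of_notMem (by simp [hxy, hxz]),
    Finset.card_insert_of_notMem (by simp [hyz]), Finset.card_singleton]

lemma pair_ne_left {α : Type*} {x u : α} (h : x ≠ u) (y v : α) : (x, y) ≠ (u, v) := by
  intro hp; rw [Prod.mk.injEq] at hp; exact h hp.1

lemma pair_ne_right {α : Type*} {y v : α} (h : y ≠ v) (x u : α) : (x, y) ≠ (u, v) := by
  intro hp; rw [Prod.mk.injEq] at hp; exact h hp.2

lemma fib_card_one (n : ℕ) [NeZero n] (a b : ZMod n) (h1 : a = b) (h2 : b = -(a+b)) :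
    (fib n (a, b)).card = 1 := by
  subst h1
  rw [fib_eq, ← h2]
  simp

lemma fib_card_three (n : ℕ) [NeZero n] (a b : ZMod n)
    (hsome : a = b ∨ a = -(a+b) ∨ b = -(a+b)) (hnot : ¬(a = b ∧ b = -(a+b))) :
    (fib n (a, b)).card = 3 := by
  rcases hsome with h | h | h
  · subst h
    have hc : a ≠ -(a+a) := fun hc => hnot ⟨rfl, hc⟩
    have hc' : -(a+a) ≠ a := Ne.symm hc
    rw [fib_eq]
    have heq : ({(a,a),(a,-(a+a)),(a,a),(a,-(a+a)),(-(a+a),a),(-(a+a),a)} :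
        Finset (ZMod n × ZMod n)) = {(a,a),(a,-(a+a)),(-(a+a),a)} := by
      ext q; simp only [Finset.mem_insert, Finset.mem_singleton]; tauto
    rw [heq]
    exact card3' _ _ _ (pair_ne_right hc _ _) (pair_ne_left hc _ _) (pair_ne_left hc _ _)
  · have hab : a ≠ b := fun hab => hnot ⟨hab, hab.symm.trans h⟩
    have hba : b ≠ a := Ne.symm hab
    rw [fib_eq, ← h]
    have heq : ({(a,b),(a,a),(b,a),(b,a),(a,a),(a,b)} : Finset (ZMod n × ZMod n))
        = {(a,b),(a,a),(b,a)} := by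
      ext q; simp only [Finset.mem_insert, Finset.mem_singleton]; tauto
    rw [heq]
    exact card3' _ _ _ (pair_ne_right hba _ _) (pair_ne_left hab _ _) (pair_ne_left hab _ _)
  · have hab : a ≠ b := fun hab => hnot ⟨hab, h⟩
    have hba : b ≠ a := Ne.symm hab
    rw [fib_eq, ← h]
    have heq : ({(a,b),(a,b),(b,a),(b,b),(b,a),(b,b)} : Finset (ZMod n × ZMod n))
        = {(a,b),(b,a),(b,b)} := by
      ext q; simp only [Finset.mem_insert, Finset.mem_singleton]; tauto
    rw [heq]
    exact card3' _ _ _ (pair_ne_left hab _ _) (pair_ne_left hab _ _) (pair_ne_right hab _ _)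

lemma fib_card_six (n : ℕ) [NeZero n] (a b : ZMod n)
    (hab : a ≠ b) (hac : a ≠ -(a+b)) (hbc : b ≠ -(a+b)) :
    (fib n (a, b)).card = 6 := by
  rw [fib_eq]
  have hba := Ne.symm hab
  have hca := Ne.symm hac
  have hcb := Ne.symm hbc
  have m1 : ((a,b) : ZMod n × ZMod n) ∉
      ({(a,-(a+b)),(b,a),(b,-(a+b)),(-(a+b),a),(-(a+b),b)} : Finset (ZMod n × ZMod n)) := by
    simp only [Finset.mem_insert, Finset.mem_singleton, not_or]
    exact ⟨pair_ne_right hbc _ _, pair_ne_left hab _ _, pair_ne_left hab _ _,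
      pair_ne_left hac _ _, pair_ne_left hac _ _⟩
  have m2 : ((a,-(a+b)) : ZMod n × ZMod n) ∉
      ({(b,a),(b,-(a+b)),(-(a+b),a),(-(a+b),b)} : Finset (ZMod n × ZMod n)) := by
    simp only [Finset.mem_insert, Finset.mem_singleton, not_or]
    exact ⟨pair_ne_left hab _ _, pair_ne_left hab _ _, pair_ne_left hac _ _, pair_ne_left hac _ _⟩
  have m3 : ((b,a) : ZMod n × ZMod n) ∉
      ({(b,-(a+b)),(-(a+b),a),(-(a+b),b)} : Finset (ZMod n × ZMod n)) := by
    simp only [Finset.mem_insert, Finset.mem_singleton, not_or]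
    exact ⟨pair_ne_right hac _ _, pair_ne_left hbc _ _, pair_ne_left hbc _ _⟩
  have m4 : ((b,-(a+b)) : ZMod n × ZMod n) ∉
      ({(-(a+b),a),(-(a+b),b)} : Finset (ZMod n × ZMod n)) := by
    simp only [Finset.mem_insert, Finset.mem_singleton, not_or]
    exact ⟨pair_ne_left hbc _ _, pair_ne_left hbc _ _⟩
  have m5 : ((-(a+b),a) : ZMod n × ZMod n) ∉ ({(-(a+b),b)} : Finset (ZMod n × ZMod n)) := by
    simp only [Finset.mem_singleton]
    exact pair_ne_right hab _ _
  rw [Finset.card_insert_of_notMem m1, Finset.card_insert_of_notMem m2,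
    Finset.card_insert_of_notMem m3, Finset.card_insert_of_notMem m4,
    Finset.card_insert_of_notMem m5, Finset.card_singleton]
open Finset in
lemma count (n : ℕ) [NeZero n] :
    6 * (Finset.univ.image (FF n)).card = n^2 + 3*n + 2 * Nat.gcd n 3 := by
  classical
  set T : Finset (ZMod n) := univ.filter (fun a : ZMod n => a+a+a = 0) with hT
  set t : ℕ := T.card with ht
  set t' : ℕ := (univ.filter (fun a : ZMod n => ¬(a+a+a = 0))).card with ht'
  have htt' : t + t' = n := by
    rw [ht, ht', hT, card_filter_add_card_filter_not, card_univ, ZMod.card]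
  have htgcd : t = Nat.gcd n 3 := card_torsion n
  set w : ZMod n × ZMod n → ℕ := fun p => 6 / (fib n p).card with hw
  have hcases : ∀ p : ZMod n × ZMod n,
      (fib n p).card = 1 ∨ (fib n p).card = 3 ∨ (fib n p).card = 6 := by
    rintro ⟨a, b⟩
    by_cases h1 : a = b ∧ b = -(a+b)
    · exact Or.inl (fib_card_one n a b h1.1 h1.2)
    · by_cases h2 : a = b ∨ a = -(a+b) ∨ b = -(a+b)
      · exact Or.inr (Or.inl (fib_card_three n a b h2 h1))
      · push_neg at h2
        exact Or.inr (Or.inr (fib_card_six n a b h2.1 h2.2.1 h2.2.2))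
  -- step 1
  have step1 : ∑ p : ZMod n × ZMod n, w p = 6 * (Finset.univ.image (FF n)).card := by
    rw [← Finset.sum_fiberwise_of_maps_to (g := FF n)
      (fun x _ => mem_image_of_mem (FF n) (mem_univ x)) w]
    have inner6 : ∀ y ∈ univ.image (FF n),
        (∑ x ∈ univ.filter (fun x => FF n x = y), w x) = 6 := by
      intro y hy
      obtain ⟨p₀, -, hp₀⟩ := mem_image.1 hy
      subst hp₀
      have hfib : univ.filter (fun x => FF n x = FF n p₀) = fib n p₀ := rfl
      rw [hfib]
      have hwconst : ∀ x ∈ fib n p₀, w x = 6 / (fib n p₀).card := by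
        intro x hx
        have hFF : FF n x = FF n p₀ := (mem_filter.1 hx).2
        simp only [hw, fib, hFF]
      rw [Finset.sum_congr rfl hwconst, Finset.sum_const, smul_eq_mul]
      rcases hcases p₀ with h|h|h <;> rw [h]
    rw [Finset.sum_congr rfl inner6, Finset.sum_const, smul_eq_mul, mul_comm]
  -- partition
  set pr1 : ZMod n × ZMod n → Prop := fun p => p.1 = p.2 ∧ p.2 = -(p.1+p.2) with hpr1
  set pr2 : ZMod n × ZMod n → Prop :=
    fun p => p.1 = p.2 ∨ p.1 = -(p.1+p.2) ∨ p.2 = -(p.1+p.2) with hpr2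
  set P1 : Finset (ZMod n × ZMod n) := univ.filter (fun p => pr1 p) with hP1
  set P2 : Finset (ZMod n × ZMod n) := univ.filter (fun p => pr2 p ∧ ¬ pr1 p) with hP2
  set P3 : Finset (ZMod n × ZMod n) := univ.filter (fun p => ¬ pr2 p) with hP3
  -- fiber card on parts
  have hwP1 : ∀ p ∈ P1, w p = 6 := by
    rintro ⟨a, b⟩ hp
    obtain ⟨h1, h2⟩ := (mem_filter.1 hp).2
    simp only [hw]
    rw [fib_card_one n a b h1 h2]
  have hwP2 : ∀ p ∈ P2, w p = 2 := by
    rintro ⟨a, b⟩ hp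
    obtain ⟨h1, h2⟩ := (mem_filter.1 hp).2
    simp only [hw]
    rw [fib_card_three n a b h1 h2]
  have hwP3 : ∀ p ∈ P3, w p = 1 := by
    rintro ⟨a, b⟩ hp
    have h2 := (mem_filter.1 hp).2
    simp only [hpr2, not_or] at h2
    simp only [hw]
    rw [fib_card_six n a b h2.1 h2.2.1 h2.2.2]
  -- card of P1
  have hP1card : P1.card = t := by
    rw [ht, hT]
    apply Finset.card_nbij' (i := fun p => p.1) (j := fun a => (a, a))
    · rintro ⟨a, b⟩ hp
      obtain ⟨h1, h2⟩ := (mem_filter.1 hp).2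
      dsimp only at h1 h2
      rw [Finset.mem_coe, mem_filter]
      refine ⟨mem_univ _, ?_⟩
      subst h1
      linear_combination h2
    · intro a ha
      have h3 := (mem_filter.1 ha).2
      rw [Finset.mem_coe, mem_filter]
      refine ⟨mem_univ _, ?_⟩
      show a = a ∧ a = -(a+a)
      exact ⟨rfl, by linear_combination h3⟩
    · rintro ⟨a, b⟩ hp
      obtain ⟨h1, h2⟩ := (mem_filter.1 hp).2
      dsimp only at h1
      show (a, a) = (a, b)
      rw [h1]
    · intro a ha; rfl
  -- cards of the three "two equal" pieces
  have hR1card : (univ.filter (fun p : ZMod n × ZMod n =>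
      p.1 = p.2 ∧ ¬(p.2 = -(p.1+p.2)))).card = t' := by
    rw [ht']
    apply Finset.card_nbij' (i := fun p => p.1) (j := fun a => (a, a))
    · rintro ⟨a, b⟩ hp
      obtain ⟨h1, h2⟩ := (mem_filter.1 hp).2
      dsimp only at h1 h2
      rw [Finset.mem_coe, mem_filter]
      refine ⟨mem_univ _, ?_⟩
      subst h1
      intro h3
      exact h2 (by linear_combination h3)
    · intro a ha
      have h3 := (mem_filter.1 ha).2
      rw [Finset.mem_coe, mem_filter]
      refine ⟨mem_univ _, ?_⟩
      show a = a ∧ ¬ a = -(a+a)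
      exact ⟨rfl, fun h4 => h3 (by linear_combination h4)⟩
    · rintro ⟨a, b⟩ hp
      obtain ⟨h1, h2⟩ := (mem_filter.1 hp).2
      dsimp only at h1
      show (a, a) = (a, b)
      rw [h1]
    · intro a ha; rfl
  have hR2card : (univ.filter (fun p : ZMod n × ZMod n =>
      p.1 = -(p.1+p.2) ∧ ¬(p.1 = p.2))).card = t' := by
    rw [ht']
    apply Finset.card_nbij' (i := fun p => p.1) (j := fun a => (a, -(a+a)))
    · rintro ⟨a, b⟩ hp
      obtain ⟨h1, h2⟩ := (mem_filter.1 hp).2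
      dsimp only at h1 h2
      rw [Finset.mem_coe, mem_filter]
      refine ⟨mem_univ _, ?_⟩
      intro h3
      exact h2 (by linear_combination h3 - h1)
    · intro a ha
      have h3 := (mem_filter.1 ha).2
      rw [Finset.mem_coe, mem_filter]
      refine ⟨mem_univ _, ?_⟩
      show a = -(a + -(a+a)) ∧ ¬ a = -(a+a)
      exact ⟨by ring, fun h4 => h3 (by linear_combination h4)⟩
    · rintro ⟨a, b⟩ hp
      obtain ⟨h1, h2⟩ := (mem_filter.1 hp).2
      dsimp only at h1 h2
      have hb : -(a+a) = b := by linear_combination -h1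
      show (a, -(a+a)) = (a, b)
      rw [hb]
    · intro a ha; rfl
  have hR3card : (univ.filter (fun p : ZMod n × ZMod n =>
      p.2 = -(p.1+p.2) ∧ ¬(p.1 = p.2))).card = t' := by
    rw [ht']
    apply Finset.card_nbij' (i := fun p => p.2) (j := fun a => (-(a+a), a))
    · rintro ⟨a, b⟩ hp
      obtain ⟨h1, h2⟩ := (mem_filter.1 hp).2
      dsimp only at h1 h2
      rw [Finset.mem_coe, mem_filter]
      refine ⟨mem_univ _, ?_⟩
      intro h3
      exact h2 (by linear_combination h1 - h3)
    · intro a ha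
      have h3 := (mem_filter.1 ha).2
      rw [Finset.mem_coe, mem_filter]
      refine ⟨mem_univ _, ?_⟩
      show a = -(-(a+a) + a) ∧ ¬ -(a+a) = a
      exact ⟨by ring, fun h4 => h3 (by linear_combination -h4)⟩
    · rintro ⟨a, b⟩ hp
      obtain ⟨h1, h2⟩ := (mem_filter.1 hp).2
      dsimp only at h1 h2
      have ha2 : -(b+b) = a := by linear_combination -h1
      show (-(b+b), b) = (a, b)
      rw [ha2]
    · intro a ha; rfl
  -- P2 as union
  have hP2card : P2.card = t' + t' + t' := by
    have himp1 : ∀ q : ZMod n × ZMod n, q.1 = q.2 → q.1 = -(q.1+q.2) → q.2 = -(q.1+q.2) :=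
      fun q h1 h2 => h1.symm.trans h2
    have himp2 : ∀ q : ZMod n × ZMod n, q.1 = -(q.1+q.2) → q.2 = -(q.1+q.2) → q.1 = q.2 :=
      fun q h1 h2 => h1.trans h2.symm
    have hsplit : P2 = (univ.filter (fun p : ZMod n × ZMod n =>
        p.1 = p.2 ∧ ¬(p.2 = -(p.1+p.2)))) ∪
        ((univ.filter (fun p : ZMod n × ZMod n => p.1 = -(p.1+p.2) ∧ ¬(p.1 = p.2))) ∪
         (univ.filter (fun p : ZMod n × ZMod n => p.2 = -(p.1+p.2) ∧ ¬(p.1 = p.2)))) := by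
      ext q
      simp only [hP2, hpr1, hpr2, mem_filter, mem_univ, true_and, mem_union]
      have h1 := himp1 q
      have h2 := himp2 q
      tauto
    have d23 : Disjoint (univ.filter (fun p : ZMod n × ZMod n => p.1 = -(p.1+p.2) ∧ ¬(p.1 = p.2)))
        (univ.filter (fun p : ZMod n × ZMod n => p.2 = -(p.1+p.2) ∧ ¬(p.1 = p.2))) := by
      rw [Finset.disjoint_left]
      rintro q hq1 hq2
      simp only [mem_filter] at hq1 hq2
      exact hq1.2.2 (himp2 q hq1.2.1 hq2.2.1)
    have d123 : Disjoint (univ.filter (fun p : ZMod n × ZMod n => p.1 = p.2 ∧ ¬(p.2 = -(p.1+p.2))))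
        ((univ.filter (fun p : ZMod n × ZMod n => p.1 = -(p.1+p.2) ∧ ¬(p.1 = p.2))) ∪
         (univ.filter (fun p : ZMod n × ZMod n => p.2 = -(p.1+p.2) ∧ ¬(p.1 = p.2)))) := by
      rw [Finset.disjoint_left]
      rintro q hq1 hq2
      simp only [mem_union, mem_filter] at hq1 hq2
      rcases hq2 with ⟨-, -, h⟩ | ⟨-, -, h⟩ <;> exact h hq1.2.1
    rw [hsplit, card_union_of_disjoint d123, card_union_of_disjoint d23,
      hR1card, hR2card, hR3card]
    omega
  -- total
  have hP123 : P1.card + P2.card + P3.card = n^2 := by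
    have e1 : (univ.filter (fun p : ZMod n × ZMod n => pr2 p)).card + P3.card
        = n^2 := by
      rw [hP3, card_filter_add_card_filter_not, card_univ]
      simp [ZMod.card, sq]
    have e2 : P1.card + P2.card = (univ.filter (fun p : ZMod n × ZMod n => pr2 p)).card := by
      have f1 : (univ.filter (fun p : ZMod n × ZMod n => pr2 p)).filter (fun p => pr1 p) = P1 := by
        rw [hP1, Finset.filter_filter]
        apply Finset.filter_congr
        intro q _
        simp only [hpr1, hpr2]
        tauto
      have f2 : (univ.filter (fun p : ZMod n × ZMod n => pr2 p)).filter (fun p => ¬ pr1 p)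
          = P2 := by
        rw [hP2, Finset.filter_filter]
      rw [← f1, ← f2, card_filter_add_card_filter_not]
    omega
  -- sums over parts
  have hsplit2 : ∑ p : ZMod n × ZMod n, w p = 6 * P1.card + 2 * P2.card + P3.card := by
    have s1 : ∑ p : ZMod n × ZMod n, w p
        = (∑ p ∈ univ.filter (fun p : ZMod n × ZMod n => pr2 p), w p)
          + ∑ p ∈ P3, w p := by
      rw [hP3, Finset.sum_filter_add_sum_filter_not]
    have s2 : (∑ p ∈ univ.filter (fun p : ZMod n × ZMod n => pr2 p), w p)
        = (∑ p ∈ P1, w p) + ∑ p ∈ P2, w p := by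
      have f1 : (univ.filter (fun p : ZMod n × ZMod n => pr2 p)).filter (fun p => pr1 p) = P1 := by
        rw [hP1, Finset.filter_filter]
        apply Finset.filter_congr
        intro q _
        simp only [hpr1, hpr2]
        tauto
      have f2 : (univ.filter (fun p : ZMod n × ZMod n => pr2 p)).filter (fun p => ¬ pr1 p)
          = P2 := by
        rw [hP2, Finset.filter_filter]
      rw [← f1, ← f2, Finset.sum_filter_add_sum_filter_not]
    rw [s1, s2, Finset.sum_congr rfl hwP1, Finset.sum_congr rfl hwP2, Finset.sum_congr rfl hwP3,
      Finset.sum_const, Finset.sum_const, Finset.sum_const, smul_eq_mul, smul_eq_mul, smul_eq_mul]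
    ring
  rw [← step1, hsplit2, hP1card, hP2card]
  have hn2 : P1.card + P2.card + P3.card = n^2 := hP123
  rw [hP1card, hP2card] at hn2
  rw [htgcd] at hn2 ⊢
  generalize hN : n^2 = N at hn2 ⊢
  omega
theorem card_A (k : ℕ) (hk : 2 ≤ k) :
    (({z : ℂ | ∃ d e : ℤ, z = alpha ((d : ℝ) / ((k : ℝ) - 1)) ((e : ℝ) / ((k : ℝ) - 1))}).ncard : ℚ)
      = (((k : ℚ) - 1)^2 + 3 * ((k : ℚ) - 1) + 2 * (Nat.gcd (k - 1) 3 : ℚ)) / 6 := by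
  classical
  set n := k - 1 with hn
  haveI : NeZero n := ⟨by omega⟩
  have hkn : k = n + 1 := by omega
  have hk1 : ((k : ℝ) - 1) = (n : ℝ) := by rw [hkn]; push_cast; ring
  have halpha : ∀ d e : ℤ,
      alpha ((d : ℝ) / ((k : ℝ) - 1)) ((e : ℝ) / ((k : ℝ) - 1))
        = FF n ((d : ZMod n), (e : ZMod n)) := by
    intro d e
    rw [hk1]
    show _ + _ + _ = ee n _ + ee n _ + ee n _
    have h1 : Complex.exp (2 * Real.pi * Complex.I * (((d : ℝ)/(n:ℝ) : ℝ) : ℂ)) = eZ n d := by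
      rw [eZ]; congr 1; push_cast; ring
    have h2 : Complex.exp (2 * Real.pi * Complex.I * (((e : ℝ)/(n:ℝ) : ℝ) : ℂ)) = eZ n e := by
      rw [eZ]; congr 1; push_cast; ring
    have h3 : Complex.exp (-(2 * Real.pi * Complex.I *
        ((((d : ℝ)/(n:ℝ) : ℝ) : ℂ) + (((e : ℝ)/(n:ℝ) : ℝ) : ℂ)))) = eZ n (-(d+e)) := by
      rw [eZ]; congr 1; push_cast; ring
    rw [h1, h2, h3, eZ_intCast, eZ_intCast, eZ_intCast]
    have : ((-(d+e) : ℤ) : ZMod n) = -(((d : ℤ) : ZMod n) + ((e : ℤ) : ZMod n)) := by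
      push_cast; ring
    rw [this]
  have hset : {z : ℂ | ∃ d e : ℤ,
      z = alpha ((d : ℝ) / ((k : ℝ) - 1)) ((e : ℝ) / ((k : ℝ) - 1))}
      = ↑(Finset.univ.image (FF n)) := by
    ext z
    simp only [Set.mem_setOf_eq, Finset.coe_image, Set.mem_image, Finset.mem_coe,
      Finset.mem_univ, Finset.coe_univ, Set.image_univ, Set.mem_range]
    constructor
    · rintro ⟨d, e, rfl⟩
      exact ⟨((d : ZMod n), (e : ZMod n)), (halpha d e).symm⟩
    · rintro ⟨p, rfl⟩
      refine ⟨(p.1.val : ℤ), (p.2.val : ℤ), ?_⟩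
      rw [halpha]
      have h1 : (((p.1.val : ℤ)) : ZMod n) = p.1 := by
        push_cast; simp [ZMod.natCast_val, ZMod.cast_id]
      have h2 : (((p.2.val : ℤ)) : ZMod n) = p.2 := by
        push_cast; simp [ZMod.natCast_val, ZMod.cast_id]
      rw [h1, h2]
  rw [hset, Set.ncard_coe_finset]
  have hcount := count n
  have hq := congrArg (Nat.cast : ℕ → ℚ) hcount
  push_cast at hq
  have hk1q : ((k : ℚ) - 1) = (n : ℚ) := by rw [hkn]; push_cast; ring
  rw [hk1q]
  rw [eq_div_iff (by norm_num : (6:ℚ) ≠ 0)]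
  linear_combination hq
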